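/- Let ρ_max be the density operator diagonal in the Fock basis with eigenvalues given by the Poisson distribution with mean E = |α|². The equation (∂/∂ε) S(ε ρ_0 + (1-ε) ρ_max)|_{ε=0} = 0, where ρ_0 = |0⟩⟨0| is the vacuum and S is von Neumann entropy in bits, is equivalent to the condition S(ρ_max) = E/ln 2. Concretely, in terms of the Poisson distribution this reads: H(Poi(E)) = E/ln 2, where H is Shannon entropy in bits. -/

import Mathlib

open Real

namespace OneRingAux

noncomputable def pp (E : ℝ) (n : ℕ) : ℝ := Real.exp (-E) * E ^ n / n.factorial

lemma pp_pos {E : ℝ} (hE : 0 < E) (n : ℕ) : 0 < pp E n := by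
  unfold pp; positivity

lemma cast_le_four_pow (n : ℕ) : (n : ℝ) ≤ 4 ^ n := by
  calc (n : ℝ) ≤ ((2^n : ℕ) : ℝ) := by exact_mod_cast (Nat.lt_two_pow_self (n := n)).le
  _ ≤ ((4^n : ℕ) : ℝ) := by exact_mod_cast Nat.pow_le_pow_left (by norm_num) n
  _ = 4 ^ n := by push_cast; ring

lemma sq_le_four_pow (n : ℕ) : ((n : ℝ))^2 ≤ 4 ^ n := by
  have h : n^2 ≤ 4^n := by
    calc n^2 = n * n := sq n
    _ ≤ 2^n * 2^n := Nat.mul_le_mul (Nat.lt_two_pow_self (n := n)).le (Nat.lt_two_pow_self (n := n)).le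
    _ = 4^n := by rw [← Nat.mul_pow]
  calc ((n:ℝ))^2 = ((n^2 : ℕ) : ℝ) := by push_cast; ring
  _ ≤ ((4^n : ℕ) : ℝ) := by exact_mod_cast h
  _ = 4^n := by push_cast; ring

lemma summable_pp {E : ℝ} (hE : 0 < E) : Summable (pp E) := by
  have := (Real.summable_pow_div_factorial E).mul_left (Real.exp (-E))
  refine this.congr fun n => ?_
  unfold pp; ring

lemma tsum_pp {E : ℝ} (hE : 0 < E) : ∑' n, pp E n = 1 := by
  have hexp : Real.exp E = ∑' n : ℕ, E ^ n / n.factorial := by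
    rw [Real.exp_eq_exp_ℝ, NormedSpace.exp_eq_tsum_div]
  have : ∑' n, pp E n = Real.exp (-E) * ∑' n : ℕ, E ^ n / n.factorial := by
    rw [← tsum_mul_left]
    refine tsum_congr fun n => ?_
    unfold pp; ring
  rw [this, ← hexp, ← Real.exp_add]
  simp

lemma log_pp {E : ℝ} (hE : 0 < E) (n : ℕ) :
    Real.log (pp E n) = -E + n * Real.log E - Real.log (n.factorial) := by
  unfold pp
  rw [Real.log_div (by positivity) (by positivity), Real.log_mul (by positivity) (by positivity),
    Real.log_exp, Real.log_pow]

lemma log_factorial_le (n : ℕ) : Real.log (n.factorial) ≤ ((n:ℝ))^2 := by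
  calc Real.log (n.factorial) ≤ Real.log ((n:ℝ)^n) := by
        apply Real.log_le_log (by positivity)
        exact_mod_cast Nat.factorial_le_pow n
  _ = n * Real.log n := Real.log_pow n n
  _ ≤ n * n := by
        apply mul_le_mul_of_nonneg_left (Real.log_le_self (by positivity)) (by positivity)
  _ = ((n:ℝ))^2 := (sq (n:ℝ)).symm

lemma summable_pplog {E : ℝ} (hE : 0 < E) :
    Summable (fun n => pp E n * Real.log (pp E n)) := by
  set C : ℝ := E + |Real.log E| + 1 with hC
  have hC1 : 1 ≤ C := by have := abs_nonneg (Real.log E); linarith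
  apply Summable.of_abs
  have hmaster : Summable (fun n : ℕ => 3 * C * Real.exp (-E) * ((4*E) ^ n / n.factorial)) :=
    (Real.summable_pow_div_factorial (4*E)).mul_left _
  refine hmaster.of_nonneg_of_le (fun n => abs_nonneg _) fun n => ?_
  have hppos := pp_pos hE n
  have hbound : |Real.log (pp E n)| ≤ C * (3 * 4 ^ n) := by
    rw [log_pp hE n]
    have h1 : |(-E) + (n:ℝ) * Real.log E - Real.log (n.factorial)|
        ≤ E + (n:ℝ) * |Real.log E| + ((n:ℝ))^2 := by
      have hlf : (0:ℝ) ≤ Real.log (n.factorial) :=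
        Real.log_nonneg (by exact_mod_cast Nat.one_le_iff_ne_zero.mpr n.factorial_ne_zero)
      have := abs_sub (-E + (n:ℝ) * Real.log E) (Real.log (n.factorial))
      calc |(-E) + (n:ℝ) * Real.log E - Real.log (n.factorial)|
          ≤ |(-E) + (n:ℝ) * Real.log E| + |Real.log (n.factorial)| := abs_sub _ _
        _ ≤ |(-E)| + |(n:ℝ) * Real.log E| + |Real.log (n.factorial)| := by
            gcongr; exact abs_add_le _ _
        _ ≤ E + (n:ℝ) * |Real.log E| + ((n:ℝ))^2 := by
            rw [abs_neg, abs_of_pos hE, abs_mul, abs_of_nonneg (n.cast_nonneg : (0:ℝ) ≤ n),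
              abs_of_nonneg hlf]
            gcongr
            exact log_factorial_le n
    have h2 : E + (n:ℝ) * |Real.log E| + ((n:ℝ))^2 ≤ C * (3 * 4 ^ n) := by
      have hn4 := cast_le_four_pow n
      have hn42 := sq_le_four_pow n
      have h14 : (1:ℝ) ≤ 4 ^ n := by simpa using pow_le_pow_right₀ (by norm_num : (1:ℝ) ≤ 4) (Nat.zero_le n)
      have hE' : 0 ≤ E := hE.le
      have habs : 0 ≤ |Real.log E| := abs_nonneg _
      nlinarith [mul_le_mul_of_nonneg_left hn4 habs, n.cast_nonneg (α := ℝ)]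
    exact h1.trans h2
  calc |pp E n * Real.log (pp E n)| = pp E n * |Real.log (pp E n)| := by
        rw [abs_mul, abs_of_pos hppos]
    _ ≤ pp E n * (C * (3 * 4 ^ n)) := by
        exact mul_le_mul_of_nonneg_left hbound hppos.le
    _ = 3 * C * Real.exp (-E) * ((4*E) ^ n / n.factorial) := by
        unfold pp; rw [mul_pow]; ring

end OneRingAux

open OneRingAux

set_option maxHeartbeats 1000000


/-- For the ring state `ρ_max` (diagonal in the Fock basis with Poisson
eigenvalues of mean `E`) and the vacuum `ρ₀`, the stationarity condition
`(∂/∂ε) S(ε ρ₀ + (1-ε) ρ_max)|_{ε=0} = 0` is equivalent to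
`S(ρ_max) = E/ln 2`, i.e. `H(Poi(E)) = E / ln 2` (entropies in bits). -/

theorem one_ring_threshold_condition (E : ℝ) (hE : 0 < E) :
    let p : ℕ → ℝ := fun n => Real.exp (-E) * E ^ n / n.factorial
    let q : ℝ → ℕ → ℝ := fun ε n => ε * (if n = 0 then 1 else 0) + (1 - ε) * p n
    let S : ℝ → ℝ := fun ε => -∑' n : ℕ, q ε n * Real.logb 2 (q ε n)
    (HasDerivAt S 0 0 ↔ (-∑' n : ℕ, p n * Real.logb 2 (p n)) = E / Real.log 2) := by
  intro p q S
  have hp : p = pp E := rfl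
  set p0 : ℝ := Real.exp (-E) with hp0def
  have hp0 : 0 < p0 := Real.exp_pos _
  have hp0lt : p0 < 1 := by
    rw [hp0def, ← Real.exp_zero]
    exact Real.exp_lt_exp.mpr (by linarith)
  have hpp0 : pp E 0 = p0 := by unfold pp; simp [hp0def]
  have hlog2 : (0:ℝ) < Real.log 2 := Real.log_pos (by norm_num)
  set B : ℝ := ∑' n, pp E (n+1) * Real.log (pp E (n+1)) with hBdef
  set T : ℝ → ℝ := fun ε => ∑' n, q ε n * Real.log (q ε n) with hTdef
  -- S in terms of T
  have hS : ∀ ε, S ε = -(T ε / Real.log 2) := by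
    intro ε
    simp only [S, T, Real.logb]
    rw [← tsum_div_const]
    congr 1
    exact tsum_congr fun n => (mul_div_assoc _ _ _).symm
  -- summability facts
  have hsum_p1 : Summable (fun n => pp E (n+1)) := (summable_nat_add_iff 1).2 (summable_pp hE)
  have hsum_pl1 : Summable (fun n => pp E (n+1) * Real.log (pp E (n+1))) :=
    (summable_nat_add_iff 1).2 (summable_pplog hE)
  have htail : ∑' n, pp E (n+1) = 1 - p0 := by
    have h := Summable.tsum_eq_zero_add (summable_pp hE)
    rw [tsum_pp hE, hpp0] at h
    linarith
  -- closed form of T near 0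
  have hg : ∀ ε : ℝ, ε ∈ Set.Ioo (-p0) (1/2 : ℝ) →
      T ε = (p0 + ε*(1-p0)) * Real.log (p0 + ε*(1-p0))
            + (1-ε) * ((1-p0) * Real.log (1-ε) + B) := by
    intro ε ⟨hε1, hε2⟩
    have h1ε : (0:ℝ) < 1 - ε := by linarith
    have hq0 : 0 < p0 + ε*(1-p0) := by nlinarith
    have hq_succ : ∀ n : ℕ, q ε (n+1) = (1-ε) * pp E (n+1) := by
      intro n; simp [q, hp]
    have hq_zero : q ε 0 = p0 + ε*(1-p0) := by
      simp [q, hp, hpp0]; ring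
    have hfun : (fun n => q ε (n+1) * Real.log (q ε (n+1)))
        = fun n => ((1-ε) * Real.log (1-ε)) * pp E (n+1)
            + (1-ε) * (pp E (n+1) * Real.log (pp E (n+1))) := by
      funext n
      rw [hq_succ, Real.log_mul (ne_of_gt h1ε) (ne_of_gt (pp_pos hE _))]
      ring
    have hfs : Summable (fun n => q ε n * Real.log (q ε n)) := by
      refine (summable_nat_add_iff 1).1 ?_
      exact ((hsum_p1.mul_left _).add (hsum_pl1.mul_left _)).congr
        fun n => (congrFun hfun n).symm
    simp only [T]
    rw [Summable.tsum_eq_zero_add hfs, hfun, Summable.tsum_add (hsum_p1.mul_left _) (hsum_pl1.mul_left _),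
      tsum_mul_left, tsum_mul_left, htail, hq_zero, ← hBdef]
    ring
  have hTg : T =ᶠ[nhds (0:ℝ)] fun ε => (p0 + ε*(1-p0)) * Real.log (p0 + ε*(1-p0))
            + (1-ε) * ((1-p0) * Real.log (1-ε) + B) := by
    filter_upwards [Ioo_mem_nhds (by linarith : -p0 < 0) (by norm_num : (0:ℝ) < 1/2)] with ε hε
    exact hg ε hε
  -- derivative of the closed form
  have hw : HasDerivAt (fun ε : ℝ => p0 + ε*(1-p0)) (1-p0) 0 := by
    simpa using ((hasDerivAt_id (0:ℝ)).mul_const (1-p0)).const_add p0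
  have hml : HasDerivAt (fun x : ℝ => x * Real.log x) (Real.log p0 + 1) ((0:ℝ)*(1-p0) + p0) := by
    rw [show (0:ℝ)*(1-p0) + p0 = p0 by ring]
    exact Real.hasDerivAt_mul_log (ne_of_gt hp0)
  have h1 : HasDerivAt (fun ε : ℝ => (p0 + ε*(1-p0)) * Real.log (p0 + ε*(1-p0)))
      ((Real.log p0 + 1) * (1-p0)) 0 := by
    have hml' : HasDerivAt (fun x : ℝ => x * Real.log x) (Real.log p0 + 1) (p0 + 0*(1-p0)) := by
      rw [show p0 + (0:ℝ)*(1-p0) = p0 by ring]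
      exact Real.hasDerivAt_mul_log (ne_of_gt hp0)
    exact hml'.comp 0 hw
  have h2 : HasDerivAt (fun ε : ℝ => 1 - ε) (-1) 0 := by
    simpa using (hasDerivAt_id (0:ℝ)).const_sub 1
  have hlog : HasDerivAt (fun ε : ℝ => Real.log (1-ε)) (-1) 0 := by
    have hl : HasDerivAt Real.log (1 - (0:ℝ))⁻¹ (1 - (0:ℝ)) := Real.hasDerivAt_log (by norm_num)
    have := hl.comp 0 h2
    rw [show (1 - (0:ℝ))⁻¹ * -1 = -1 by norm_num] at this
    exact this
  have h3 : HasDerivAt (fun ε : ℝ => (1-p0) * Real.log (1-ε) + B) (-(1-p0)) 0 := by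
    have := (hlog.const_mul (1-p0)).add_const B
    simpa using this
  have h4 : HasDerivAt (fun ε : ℝ => (1-ε) * ((1-p0) * Real.log (1-ε) + B)) (-B - (1-p0)) 0 := by
    have := h2.mul h3
    refine this.congr_deriv ?_
    simp only [sub_zero, Real.log_one]
    ring
  have hgd : HasDerivAt (fun ε : ℝ => (p0 + ε*(1-p0)) * Real.log (p0 + ε*(1-p0))
      + (1-ε) * ((1-p0) * Real.log (1-ε) + B))
      ((Real.log p0 + 1) * (1-p0) + (-B - (1-p0))) 0 := h1.add h4
  have hT : HasDerivAt T (-(1-p0)*E - B) 0 := by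
    have := hgd.congr_of_eventuallyEq hTg
    refine this.congr_deriv ?_
    rw [hp0def, Real.log_exp]
    ring
  have hSd : HasDerivAt S (-((-(1-p0)*E - B) / Real.log 2)) 0 := by
    have := (hT.div_const (Real.log 2)).neg
    have hfun : S = fun ε => -(T ε / Real.log 2) := funext hS
    rw [hfun]
    exact this
  -- value of the entropy
  have hH : ∑' n, pp E n * Real.log (pp E n) = p0 * (-E) + B := by
    rw [Summable.tsum_eq_zero_add (summable_pplog hE), hpp0, ← hBdef]
    congr 2
    rw [hp0def, Real.log_exp]
  have hHb : (∑' n : ℕ, p n * Real.logb 2 (p n)) = (p0 * (-E) + B) / Real.log 2 := by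
    rw [hp]
    simp only [Real.logb]
    rw [← hH, ← tsum_div_const]
    exact tsum_congr fun n => (mul_div_assoc _ _ _).symm
  constructor
  · intro h
    have hu := h.unique hSd
    have hB : B = -(1-p0)*E := by
      field_simp at hu
      linarith
    rw [hHb, hB]
    field_simp
    ring
  · intro h
    rw [hHb] at h
    have hB : B = -(1-p0)*E := by
      field_simp at h
      linarith
    have : -((-(1-p0)*E - B) / Real.log 2) = 0 := by
      rw [hB]; simp
    rw [this] at hSd
    exact hSd
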